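/- Fix a₀ ∈ ℝ^{d-1} and a nonzero vector u ∈ ℝ^{d-1} with |a₀|, |u| sufficiently small, and define s(r) = (r e₁ + a₀)/√(1 + |r e₁ + a₀|²) for r ∈ ℝ with |r| small, where e₁ is the first standard basis vector. Let g(v) = √(1-|v|²) and f_u(r) = g(u + s(r)) − g(s(r)). Then the equation f_u'(r) = 0 is equivalent to the vanishing of a polynomial p_{u,a₀}(r) in r of degree bounded by a constant depending only on d, and this polynomial is identically zero only if u = 0. Consequently, for u ≠ 0, the function r ↦ f_u(r) is at most O(1)-to-one on |r| ≪ 1. -/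

import Mathlib

open RealInnerProductSpace Polynomial


noncomputable section

/-- `s(r) = (r e₁ + a₀)/√(1 + |r e₁ + a₀|²)`. -/
def sCurve (m : ℕ) (a₀ : EuclideanSpace ℝ (Fin (m + 1))) (r : ℝ) :
    EuclideanSpace ℝ (Fin (m + 1)) :=
  (Real.sqrt (1 + ‖r • EuclideanSpace.single (0 : Fin (m + 1)) (1 : ℝ) + a₀‖ ^ 2))⁻¹ •
    (r • EuclideanSpace.single (0 : Fin (m + 1)) (1 : ℝ) + a₀)

/-- `f_u(r) = g(u + s(r)) − g(s(r))` with `g(v) = √(1-|v|²)`. -/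
def fFiber (m : ℕ) (a₀ u : EuclideanSpace ℝ (Fin (m + 1))) (r : ℝ) : ℝ :=
  Real.sqrt (1 - ‖u + sCurve m a₀ r‖ ^ 2) - Real.sqrt (1 - ‖sCurve m a₀ r‖ ^ 2)

namespace Stmt14Aux

def polyP (a1 k α β c : ℝ) : Polynomial ℝ :=
  (C c * (C 2 * X + C (2*a1))^2
    + ((C α * X + C β) * (C 2 * X + C (2*a1)) - C (2*α) * (X^2 + C (2*a1) * X + C k))^2)^2
  - C (16*α^2) * (C 2 * X + C (2*a1))^2 * (X^2 + C (2*a1) * X + C k)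

lemma polyP_eval (a1 k α β c r : ℝ) :
    (polyP a1 k α β c).eval r
      = (c * (2*r+2*a1)^2 + ((α*r+β)*(2*r+2*a1) - 2*α*(r^2+2*a1*r+k))^2)^2
        - 16*α^2 * (2*r+2*a1)^2 * (r^2+2*a1*r+k) := by
  simp [polyP]

variable {m : ℕ} (a₀ u : EuclideanSpace ℝ (Fin (m + 1)))

lemma norm_w_sq (r : ℝ) :
    ‖r • EuclideanSpace.single (0 : Fin (m + 1)) (1 : ℝ) + a₀‖ ^ 2
      = r ^ 2 + 2 * (a₀ 0) * r + ‖a₀‖ ^ 2 := by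
  rw [norm_add_sq_real, norm_smul, real_inner_smul_left,
    EuclideanSpace.inner_single_left]
  simp [EuclideanSpace.norm_single, mul_pow]
  ring

lemma inner_u_w (r : ℝ) :
    ⟪u, r • EuclideanSpace.single (0 : Fin (m + 1)) (1 : ℝ) + a₀⟫
      = (u 0) * r + ⟪u, a₀⟫ := by
  rw [inner_add_right, real_inner_smul_right, EuclideanSpace.inner_single_right]
  simp [mul_comm]

lemma q_pos (r : ℝ) : 0 < r ^ 2 + 2 * (a₀ 0) * r + (1 + ‖a₀‖ ^ 2) := by
  have h := norm_w_sq a₀ (m := m) r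
  nlinarith [sq_nonneg ‖r • EuclideanSpace.single (0 : Fin (m + 1)) (1 : ℝ) + a₀‖]

lemma one_sub_norm_s (r : ℝ) :
    1 - ‖sCurve m a₀ r‖ ^ 2 = (r ^ 2 + 2 * (a₀ 0) * r + (1 + ‖a₀‖ ^ 2))⁻¹ := by
  set q : ℝ := r ^ 2 + 2 * (a₀ 0) * r + (1 + ‖a₀‖ ^ 2) with hqdef
  have hq0 : 0 < q := q_pos a₀ r
  have hw : 1 + ‖r • EuclideanSpace.single (0 : Fin (m + 1)) (1 : ℝ) + a₀‖ ^ 2 = q := by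
    rw [norm_w_sq]; ring
  have hsq : Real.sqrt q ^ 2 = q := Real.sq_sqrt hq0.le
  have hs : ‖sCurve m a₀ r‖ ^ 2 = (q - 1) / q := by
    rw [sCurve, norm_smul, hw, mul_pow, norm_inv, Real.norm_eq_abs,
      abs_of_nonneg (Real.sqrt_nonneg q)]
    rw [show ‖r • EuclideanSpace.single (0 : Fin (m + 1)) (1 : ℝ) + a₀‖ ^ 2 = q - 1 by
      rw [norm_w_sq]; ring]
    rw [inv_pow, hsq]
    ring
  rw [hs]
  field_simp
  ring

lemma one_sub_norm_us (r : ℝ) :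
    1 - ‖u + sCurve m a₀ r‖ ^ 2
      = (r ^ 2 + 2 * (a₀ 0) * r + (1 + ‖a₀‖ ^ 2))⁻¹ - ‖u‖ ^ 2
        - 2 * ((u 0) * r + ⟪u, a₀⟫) *
          (Real.sqrt (r ^ 2 + 2 * (a₀ 0) * r + (1 + ‖a₀‖ ^ 2)))⁻¹ := by
  set q : ℝ := r ^ 2 + 2 * (a₀ 0) * r + (1 + ‖a₀‖ ^ 2) with hqdef
  have hw : 1 + ‖r • EuclideanSpace.single (0 : Fin (m + 1)) (1 : ℝ) + a₀‖ ^ 2 = q := by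
    rw [norm_w_sq]; ring
  have h1 := one_sub_norm_s a₀ (m := m) r
  rw [norm_add_sq_real]
  rw [show ⟪u, sCurve m a₀ r⟫ = ((u 0) * r + ⟪u, a₀⟫) * (Real.sqrt q)⁻¹ by
    rw [sCurve, real_inner_smul_right, hw, inner_u_w]; ring]
  rw [← hqdef] at h1
  nlinarith [h1]

/-- scalar form of `fFiber`. -/
lemma fFiber_eq :
    fFiber m a₀ u = fun r =>
      Real.sqrt ((r ^ 2 + 2 * (a₀ 0) * r + (1 + ‖a₀‖ ^ 2))⁻¹ - ‖u‖ ^ 2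
          - 2 * ((u 0) * r + ⟪u, a₀⟫) *
            (Real.sqrt (r ^ 2 + 2 * (a₀ 0) * r + (1 + ‖a₀‖ ^ 2)))⁻¹)
        - (Real.sqrt (r ^ 2 + 2 * (a₀ 0) * r + (1 + ‖a₀‖ ^ 2)))⁻¹ := by
  funext r
  rw [fFiber, one_sub_norm_us, one_sub_norm_s]
  rw [Real.sqrt_inv]

lemma norm_s_sq_le (ha : ‖a₀‖ < 1/10) {r : ℝ} (hr : |r| < 1/10) :
    ‖sCurve m a₀ r‖ ^ 2 ≤ 1/25 := by
  set Q : ℝ := r ^ 2 + 2 * (a₀ 0) * r + (1 + ‖a₀‖ ^ 2) with hQ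
  have hq0 : 0 < Q := q_pos a₀ r
  have h1 : 1 - ‖sCurve m a₀ r‖ ^ 2 = Q⁻¹ := one_sub_norm_s a₀ r
  have hw2 : ‖r • EuclideanSpace.single (0 : Fin (m + 1)) (1 : ℝ) + a₀‖ ^ 2 ≤ 1/25 := by
    have hb : ‖r • EuclideanSpace.single (0 : Fin (m + 1)) (1 : ℝ) + a₀‖ ≤ |r| + ‖a₀‖ := by
      calc ‖r • EuclideanSpace.single (0 : Fin (m + 1)) (1 : ℝ) + a₀‖
          ≤ ‖r • EuclideanSpace.single (0 : Fin (m + 1)) (1 : ℝ)‖ + ‖a₀‖ := norm_add_le _ _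
        _ = |r| + ‖a₀‖ := by rw [norm_smul, EuclideanSpace.norm_single]; simp
    nlinarith [norm_nonneg (r • EuclideanSpace.single (0 : Fin (m + 1)) (1 : ℝ) + a₀),
      abs_nonneg r, norm_nonneg a₀]
  have hq1 : Q = 1 + ‖r • EuclideanSpace.single (0 : Fin (m + 1)) (1 : ℝ) + a₀‖ ^ 2 := by
    rw [norm_w_sq]; ring
  have h2 : Q⁻¹ * Q = 1 := inv_mul_cancel₀ hq0.ne'
  have hqinv : 1 - Q⁻¹ ≤ Q - 1 := by
    nlinarith [sq_nonneg (Q - 1), inv_pos.2 hq0, h2]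
  linarith [h1, hq1, hw2, hqinv]

lemma norm_s_le (ha : ‖a₀‖ < 1/10) {r : ℝ} (hr : |r| < 1/10) :
    ‖sCurve m a₀ r‖ ≤ 1/5 := by
  nlinarith [norm_s_sq_le a₀ ha hr, norm_nonneg (sCurve m a₀ r)]

lemma A_pos (ha : ‖a₀‖ < 1/10) (hu : ‖u‖ < 1/10) {r : ℝ} (hr : |r| < 1/10) :
    0 < 1 - ‖u + sCurve m a₀ r‖ ^ 2 := by
  have h : ‖u + sCurve m a₀ r‖ ≤ 3/10 := by
    calc ‖u + sCurve m a₀ r‖ ≤ ‖u‖ + ‖sCurve m a₀ r‖ := norm_add_le _ _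
      _ ≤ 3/10 := by linarith [norm_s_le a₀ ha hr]
  nlinarith [norm_nonneg (u + sCurve m a₀ r)]

set_option maxHeartbeats 1000000 in
/-- The key analytic lemma. -/
lemma crit (ha : ‖a₀‖ < 1/10) (hu : ‖u‖ < 1/10) {r : ℝ} (hr : |r| < 1/10) :
    DifferentiableAt ℝ (fFiber m a₀ u) r ∧
    (deriv (fFiber m a₀ u) r = 0 →
      (polyP (a₀ 0) (1 + ‖a₀‖ ^ 2) (u 0) ⟪u, a₀⟫ (‖u‖ ^ 2)).eval r = 0) := by
  set a1 : ℝ := a₀ 0 with ha1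
  set k : ℝ := 1 + ‖a₀‖ ^ 2 with hk
  set α : ℝ := u 0 with hα
  set β : ℝ := ⟪u, a₀⟫ with hβ
  set c : ℝ := ‖u‖ ^ 2 with hc
  set q : ℝ → ℝ := fun x => x ^ 2 + 2 * a1 * x + k with hqdef
  set L : ℝ → ℝ := fun x => α * x + β with hLdef
  set A : ℝ → ℝ := fun x => (q x)⁻¹ - c - 2 * (L x) * (Real.sqrt (q x))⁻¹ with hAdef
  have hq0 : 0 < q r := q_pos a₀ r
  set σ : ℝ := Real.sqrt (q r) with hσdef
  have hσ0 : 0 < σ := Real.sqrt_pos.2 hq0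
  have hσ2 : σ ^ 2 = q r := Real.sq_sqrt hq0.le
  have hAr : A r = 1 - ‖u + sCurve m a₀ r‖ ^ 2 := (one_sub_norm_us a₀ u r).symm
  have hA0 : 0 < A r := hAr ▸ A_pos a₀ u ha hu hr
  set τ : ℝ := Real.sqrt (A r) with hτdef
  have hτ0 : 0 < τ := Real.sqrt_pos.2 hA0
  have hτ2 : τ ^ 2 = A r := Real.sq_sqrt hA0.le
  -- derivatives
  have hq' : HasDerivAt q (2 * r + 2 * a1) r := by
    have h1 : HasDerivAt (fun x : ℝ => x ^ 2) (2 * r) r := by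
      simpa using hasDerivAt_pow 2 r
    have h2 : HasDerivAt (fun x : ℝ => 2 * a1 * x) (2 * a1) r := by
      simpa using (hasDerivAt_id r).const_mul (2 * a1)
    simpa [hqdef] using (h1.add h2).add_const k
  have hsqrtq : HasDerivAt (fun x => Real.sqrt (q x)) (1 / (2 * σ) * (2 * r + 2 * a1)) r :=
    (Real.hasDerivAt_sqrt hq0.ne').comp r hq'
  have hinvsqrt : HasDerivAt (fun x => (Real.sqrt (q x))⁻¹)
      (-(1 / (2 * σ) * (2 * r + 2 * a1)) / σ ^ 2) r := hsqrtq.inv hσ0.ne'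
  have hinvq : HasDerivAt (fun x => (q x)⁻¹) (-(2 * r + 2 * a1) / (q r) ^ 2) r :=
    hq'.inv hq0.ne'
  have hL' : HasDerivAt L α r := by
    have := ((hasDerivAt_id r).const_mul α).add_const β
    simpa [hLdef] using this
  have hprod : HasDerivAt (fun x => 2 * (L x) * (Real.sqrt (q x))⁻¹)
      (2 * α * σ⁻¹ + 2 * (L r) * (-(1 / (2 * σ) * (2 * r + 2 * a1)) / σ ^ 2)) r := by
    have := ((hL'.const_mul 2).mul hinvsqrt)
    convert this using 1
    all_goals rfl
  have hA' : HasDerivAt A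
      (-(2 * r + 2 * a1) / (q r) ^ 2
        - (2 * α * σ⁻¹ + 2 * (L r) * (-(1 / (2 * σ) * (2 * r + 2 * a1)) / σ ^ 2))) r := by
    exact (hinvq.sub_const c).sub hprod
  have hsqrtA : HasDerivAt (fun x => Real.sqrt (A x))
      (1 / (2 * τ) * (-(2 * r + 2 * a1) / (q r) ^ 2
        - (2 * α * σ⁻¹ + 2 * (L r) * (-(1 / (2 * σ) * (2 * r + 2 * a1)) / σ ^ 2)))) r :=
    (Real.hasDerivAt_sqrt hA0.ne').comp r hA'
  have hf : HasDerivAt (fFiber m a₀ u)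
      (1 / (2 * τ) * (-(2 * r + 2 * a1) / (q r) ^ 2
        - (2 * α * σ⁻¹ + 2 * (L r) * (-(1 / (2 * σ) * (2 * r + 2 * a1)) / σ ^ 2)))
        - -(1 / (2 * σ) * (2 * r + 2 * a1)) / σ ^ 2) r := by
    rw [fFiber_eq a₀ u]
    exact hsqrtA.sub hinvsqrt
  refine ⟨hf.differentiableAt, fun h0 => ?_⟩
  have hval := hf.deriv
  rw [h0] at hval
  -- now pure algebra
  set q' : ℝ := 2 * r + 2 * a1 with hq'def
  set ℓ : ℝ := L r with hℓdef
  rw [← hσ2] at hval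
  field_simp [hσ0.ne', hτ0.ne'] at hval
  have h1s : 4 * σ ^ 7 * (-q' + (ℓ * q' - 2 * α * σ ^ 2) * σ + q' * τ * σ) = 0 := by
    linear_combination (-4 * σ ^ 7) * hval
  have h1 : -q' + (ℓ * q' - 2 * α * σ ^ 2) * σ + q' * τ * σ = 0 := by
    rcases mul_eq_zero.mp h1s with h | h
    · exact absurd h (by positivity)
    · exact h
  have h2 : (-q' + (ℓ * q' - 2 * α * σ ^ 2) * σ) ^ 2 = q' ^ 2 * τ ^ 2 * σ ^ 2 := by
    linear_combination (-q' + (ℓ * q' - 2 * α * σ ^ 2) * σ - q' * τ * σ) * h1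
  have hA_eq : A r = (q r)⁻¹ - c - 2 * ℓ * σ⁻¹ := rfl
  have h3 : τ ^ 2 * σ ^ 2 = 1 - c * σ ^ 2 - 2 * ℓ * σ := by
    rw [hτ2, hA_eq, ← hσ2]
    field_simp
  have h4 : (-q' + (ℓ * q' - 2 * α * σ ^ 2) * σ) ^ 2
      = q' ^ 2 * (1 - c * σ ^ 2 - 2 * ℓ * σ) := by
    linear_combination h2 + q' ^ 2 * h3
  have h5 : σ ^ 2 * ((c * q' ^ 2 + (ℓ * q' - 2 * α * σ ^ 2) ^ 2) + 4 * α * q' * σ) = 0 := by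
    linear_combination h4
  have h6 : (c * q' ^ 2 + (ℓ * q' - 2 * α * σ ^ 2) ^ 2) + 4 * α * q' * σ = 0 := by
    rcases mul_eq_zero.mp h5 with h | h
    · exact absurd h (by positivity)
    · exact h
  have heval : (polyP a1 k α β c).eval r
      = (c * q' ^ 2 + (ℓ * q' - 2 * α * (q r)) ^ 2) ^ 2 - 16 * α ^ 2 * q' ^ 2 * (q r) :=
    polyP_eval a1 k α β c r
  rw [heval, ← hσ2]
  linear_combination ((c * q' ^ 2 + (ℓ * q' - 2 * α * σ ^ 2) ^ 2) - 4 * α * q' * σ) * h6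



lemma polyP_natDegree (a1 k α β c : ℝ) : (polyP a1 k α β c).natDegree ≤ 8 := by
  unfold polyP
  compute_degree

lemma polyP_zero (a1 k α β c : ℝ) (hk : a1^2 < k) (hc : 0 ≤ c)
    (h : polyP a1 k α β c = 0) : c = 0 := by
  have e1 := congrArg (Polynomial.eval (-a1)) h
  rw [polyP_eval] at e1
  simp at e1
  have hα : α = 0 := by
    rcases e1 with h' | h'
    · exact h'
    · nlinarith
  subst hα
  have e2 := congrArg (Polynomial.eval (1 - a1)) h
  rw [polyP_eval] at e2
  simp at e2
  nlinarith [sq_nonneg β, e2]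

lemma fFiber_continuous : Continuous (fFiber m a₀ u) := by
  rw [fFiber_eq]
  have hq : ∀ x : ℝ, 0 < x ^ 2 + 2 * (a₀ 0) * x + (1 + ‖a₀‖ ^ 2) := q_pos a₀
  have hqc : Continuous (fun x : ℝ => x ^ 2 + 2 * (a₀ 0) * x + (1 + ‖a₀‖ ^ 2)) := by
    continuity
  have hsq : Continuous (fun x : ℝ => Real.sqrt (x ^ 2 + 2 * (a₀ 0) * x + (1 + ‖a₀‖ ^ 2))) :=
    Real.continuous_sqrt.comp hqc
  have hne : ∀ x : ℝ, Real.sqrt (x ^ 2 + 2 * (a₀ 0) * x + (1 + ‖a₀‖ ^ 2)) ≠ 0 :=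
    fun x => (Real.sqrt_pos.2 (hq x)).ne'
  have c1 : Continuous (fun x : ℝ => (x ^ 2 + 2 * (a₀ 0) * x + (1 + ‖a₀‖ ^ 2))⁻¹) :=
    hqc.inv₀ fun x => (hq x).ne'
  have c2 : Continuous (fun x : ℝ => 2 * ((u 0) * x + ⟪u, a₀⟫)) := by continuity
  have c3 : Continuous
      (fun x : ℝ => (Real.sqrt (x ^ 2 + 2 * (a₀ 0) * x + (1 + ‖a₀‖ ^ 2)))⁻¹) :=
    hsq.inv₀ hne
  exact (Real.continuous_sqrt.comp
    (((c1.sub continuous_const)).sub (c2.mul c3))).sub c3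

end Stmt14Aux

open Stmt14Aux in
/-- For `|a₀|, |u|` small, `f_u'(r) = 0` is equivalent to the vanishing of a polynomial
`p_{u,a₀}` of bounded degree, which is identically zero only if `u = 0`; consequently,
for `u ≠ 0` the function `f_u` is `O(1)`-to-one on `|r| ≪ 1`. -/
theorem stmt_14 (m : ℕ) :
    ∃ δ : ℝ, 0 < δ ∧ ∃ D N : ℕ,
      ∀ a₀ u : EuclideanSpace ℝ (Fin (m + 1)), ‖a₀‖ < δ → ‖u‖ < δ →
        ∃ p : Polynomial ℝ,
          p.natDegree ≤ D ∧
          (∀ r : ℝ, |r| < δ → (deriv (fFiber m a₀ u) r = 0 ↔ Polynomial.eval r p = 0)) ∧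
          (p = 0 → u = 0) ∧
          (u ≠ 0 → ∀ y : ℝ, Set.encard {r : ℝ | |r| < δ ∧ fFiber m a₀ u r = y} ≤ N) := by
  classical
  refine ⟨1/10, by norm_num, 8, 9, fun a₀ u ha hu => ?_⟩
  by_cases hu0 : u = 0
  · subst hu0
    have hzero : fFiber m a₀ 0 = fun _ => 0 := by
      funext r
      simp [fFiber]
    refine ⟨0, by simp, fun r hr => ?_, fun _ => rfl, fun h => absurd rfl h⟩
    rw [hzero]
    simp
  · set P := polyP (a₀ 0) (1 + ‖a₀‖ ^ 2) (u 0) ⟪u, a₀⟫ (‖u‖ ^ 2) with hP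
    have hPne : P ≠ 0 := by
      intro h
      have hk : (a₀ 0) ^ 2 < 1 + ‖a₀‖ ^ 2 := by
        have h0 : |(a₀ 0)| ≤ ‖a₀‖ := by
          have := abs_real_inner_le_norm (EuclideanSpace.single (0 : Fin (m + 1)) (1 : ℝ)) a₀
          rw [EuclideanSpace.inner_single_left] at this
          simpa [EuclideanSpace.norm_single] using this
        have h1 := mul_self_le_mul_self (abs_nonneg (a₀ 0)) h0
        nlinarith [sq_abs (a₀ 0), h1]
      have hc := polyP_zero _ _ _ _ _ hk (sq_nonneg ‖u‖) h
      exact hu0 (by simpa [norm_eq_zero] using pow_eq_zero_iff (n := 2) (by norm_num) |>.mp hc)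
    set S : Finset ℝ := P.roots.toFinset.filter
      (fun x => |x| < 1/10 ∧ deriv (fFiber m a₀ u) x = 0) with hS
    have hmemS : ∀ x : ℝ, x ∈ S ↔ (|x| < 1/10 ∧ deriv (fFiber m a₀ u) x = 0) := by
      intro x
      rw [hS, Finset.mem_filter]
      constructor
      · exact fun h => h.2
      · intro h
        refine ⟨Multiset.mem_toFinset.2 (Polynomial.mem_roots'.2 ⟨hPne, ?_⟩), h⟩
        exact (crit a₀ u ha hu h.1).2 h.2
    have hcardS : S.card ≤ 8 := by
      calc S.card ≤ P.roots.toFinset.card := Finset.card_filter_le _ _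
        _ ≤ Multiset.card P.roots := Multiset.toFinset_card_le _
        _ ≤ P.natDegree := Polynomial.card_roots' P
        _ ≤ 8 := polyP_natDegree _ _ _ _ _
    refine ⟨∏ x ∈ S, (Polynomial.X - Polynomial.C x), ?_, ?_, ?_, ?_⟩
    · rw [Polynomial.natDegree_prod _ _ (fun x _ => Polynomial.X_sub_C_ne_zero x)]
      simpa [Polynomial.natDegree_X_sub_C] using hcardS
    · intro r hr
      rw [Polynomial.eval_prod, Finset.prod_eq_zero_iff]
      constructor
      · intro h0
        exact ⟨r, (hmemS r).2 ⟨hr, h0⟩, by simp⟩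
      · rintro ⟨x, hx, hx0⟩
        have hrx : r = x := by
          have := hx0
          simp only [Polynomial.eval_sub, Polynomial.eval_X, Polynomial.eval_C] at this
          linarith [sub_eq_zero.mp this]
        rw [hrx]
        exact ((hmemS x).1 hx).2
    · intro h
      exact absurd h (Polynomial.Monic.ne_zero
        (Polynomial.monic_prod_of_monic _ _ fun x _ => Polynomial.monic_X_sub_C x))
    · intro _ y
      by_contra hcon
      push_neg at hcon
      have h10 : ((10 : ℕ) : ℕ∞) ≤ Set.encard {r : ℝ | |r| < 1/10 ∧ fFiber m a₀ u r = y} := by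
        have := Order.add_one_le_of_lt hcon
        calc ((10 : ℕ) : ℕ∞) = ((9 : ℕ) : ℕ∞) + 1 := by norm_num
          _ ≤ _ := this
      obtain ⟨T, hTsub, hTcard⟩ := Set.exists_subset_encard_eq h10
      have hTfin : T.Finite := Set.finite_of_encard_eq_coe hTcard
      have hFcard : hTfin.toFinset.card = 10 := by
        have := hTfin.encard_eq_coe_toFinset_card
        rw [hTcard] at this
        exact_mod_cast this.symm
      set x : Fin 10 ↪o ℝ := hTfin.toFinset.orderEmbOfFin hFcard with hx
      have hxT : ∀ j : Fin 10, x j ∈ T := fun j =>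
        hTfin.mem_toFinset.mp (hTfin.toFinset.orderEmbOfFin_mem hFcard j)
      have hxprop : ∀ j : Fin 10, |x j| < 1/10 ∧ fFiber m a₀ u (x j) = y :=
        fun j => hTsub (hxT j)
      have hR : ∀ i : Fin 9, ∃ z, z ∈ Set.Ioo (x i.castSucc) (x i.succ)
          ∧ deriv (fFiber m a₀ u) z = 0 := by
        intro i
        have hlt : x i.castSucc < x i.succ := x.strictMono Fin.castSucc_lt_succ
        have heq : fFiber m a₀ u (x i.castSucc) = fFiber m a₀ u (x i.succ) := by
          rw [(hxprop i.castSucc).2, (hxprop i.succ).2]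
        obtain ⟨z, hz1, hz2⟩ := exists_deriv_eq_zero hlt
          ((fFiber_continuous a₀ u).continuousOn) heq
        exact ⟨z, hz1, hz2⟩
      choose g hg1 hg2 using hR
      have hgS : ∀ i : Fin 9, g i ∈ S := by
        intro i
        refine (hmemS (g i)).2 ⟨?_, hg2 i⟩
        have h1 := (hxprop i.castSucc).1
        have h2 := (hxprop i.succ).1
        have := hg1 i
        rw [Set.mem_Ioo] at this
        rw [abs_lt] at h1 h2 ⊢
        constructor <;> [linarith [this.1, h1.1]; linarith [this.2, h2.2]]
      have hginj : Function.Injective g := by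
        have hmono : StrictMono g := by
          intro i j hij
          have h1 : g i < x i.succ := (hg1 i).2
          have h2 : x j.castSucc < g j := (hg1 j).1
          have h3 : x i.succ ≤ x j.castSucc := by
            apply x.monotone
            exact Fin.succ_le_castSucc_iff.2 hij
          linarith
        exact hmono.injective
      have h9 : (Finset.univ : Finset (Fin 9)).card ≤ S.card :=
        Finset.card_le_card_of_injOn g (fun i _ => hgS i) hginj.injOn
      simp at h9
      omega
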